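/- Let σ be a simple permutation of length m ≥ 4. If σ[α₁,…,α_m] = σ[α₁',…,α_m'] for nonempty permutations α₁,…,α_m, α₁',…,α_m', then α_i = α_i' for all 1 ≤ i ≤ m. -/
import Mathlib


/-- A permutation of length `n`. -/
abbrev Perm (n : ℕ) := Equiv.Perm (Fin n)

/-- `σ` is contained in `π`: there is a strictly increasing sequence of indices of `π`
on which `π` is order isomorphic to `σ`. -/
def Contains {m n : ℕ} (σ : Perm m) (π : Perm n) : Prop :=
  ∃ f : Fin m → Fin n, StrictMono f ∧ ∀ s t : Fin m, π (f s) < π (f t) ↔ σ s < σ t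

/-- A permutation class: a downset in the containment order. -/
def IsPermClass (C : ∀ n, Set (Perm n)) : Prop :=
  ∀ ⦃m n : ℕ⦄ (σ : Perm m) (π : Perm n), π ∈ C n → Contains σ π → σ ∈ C m

/-- A set of contiguous values. -/
def IsRange {n : ℕ} (I : Finset (Fin n)) : Prop :=
  ∀ ⦃i j l : Fin n⦄, i ∈ I → l ∈ I → i ≤ j → j ≤ l → j ∈ I

/-- An interval of `π`: a set of contiguous indices mapped to a set of contiguous values. -/
def IsPermInterval {n : ℕ} (π : Perm n) (I : Finset (Fin n)) : Prop :=
  IsRange I ∧ IsRange (I.image π)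

/-- A permutation is simple if its only intervals have size `0`, `1`, or `n`. -/
def IsSimple {n : ℕ} (π : Perm n) : Prop :=
  ∀ I : Finset (Fin n), IsPermInterval π I → I.card ≤ 1 ∨ I.card = n

/-- `π` is the inflation `σ[α 0, …, α (m-1)]` of `σ` by the nonempty permutations
`α i` (of lengths `k i ≥ 1`): `π` has length `∑ i, k i` and its value at position
`(∑_{t < i} k t) + j` equals `(∑_{t : σ t < σ i} k t) + α i j`. -/
def IsInflation {N m : ℕ} {k : Fin m → ℕ} (σ : Perm m) (α : ∀ i, Perm (k i))
    (π : Perm N) : Prop :=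
  (∀ i, 0 < k i) ∧ N = ∑ i, k i ∧
    ∀ (i : Fin m) (j : Fin (k i)) (p : Fin N),
      (p : ℕ) = (∑ t ∈ Finset.univ.filter fun t => t < i, k t) + (j : ℕ) →
      (π p : ℕ) = (∑ t ∈ Finset.univ.filter fun t => σ t < σ i, k t) + (α i j : ℕ)

namespace Aux

def pref {m : ℕ} (k : Fin m → ℕ) (i : Fin m) : ℕ :=
  ∑ t ∈ Finset.univ.filter (fun t => t < i), k t

def vpref {m : ℕ} (σ : Perm m) (k : Fin m → ℕ) (i : Fin m) : ℕ :=
  ∑ t ∈ Finset.univ.filter (fun t => σ t < σ i), k t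

variable {m : ℕ} {k : Fin m → ℕ} {σ : Perm m}

lemma pref_mono {i i' : Fin m} (h : i ≤ i') : pref k i ≤ pref k i' := by
  apply Finset.sum_le_sum_of_subset
  intro t ht
  simp only [Finset.mem_filter, Finset.mem_univ, true_and] at *
  exact lt_of_lt_of_le ht h

lemma pref_add_le {i i' : Fin m} (h : i < i') : pref k i + k i ≤ pref k i' := by
  have hins : insert i (Finset.univ.filter (fun t => t < i)) ⊆
      Finset.univ.filter (fun t => t < i') := by
    intro t ht
    simp only [Finset.mem_insert, Finset.mem_filter, Finset.mem_univ, true_and] at *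
    rcases ht with rfl | ht
    · exact h
    · exact ht.trans h
  have := Finset.sum_le_sum_of_subset (f := k) hins
  rwa [Finset.sum_insert (by simp), add_comm] at this
  
lemma pref_add_le_sum (i : Fin m) : pref k i + k i ≤ ∑ t, k t := by
  have hins : insert i (Finset.univ.filter (fun t => t < i)) ⊆ Finset.univ := by
    intro t _; simp
  have := Finset.sum_le_sum_of_subset (f := k) hins
  rwa [Finset.sum_insert (by simp), add_comm] at this

lemma vpref_eq (i : Fin m) : vpref σ k i = pref (fun s => k (σ.symm s)) (σ i) := by
  unfold vpref pref
  apply Finset.sum_equiv σ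
  · intro t; simp
  · intro t _; simp

lemma vpref_mono {i i' : Fin m} (h : σ i ≤ σ i') : vpref σ k i ≤ vpref σ k i' := by
  rw [vpref_eq, vpref_eq]
  exact pref_mono h

lemma vpref_add_le {i i' : Fin m} (h : σ i < σ i') : vpref σ k i + k i ≤ vpref σ k i' := by
  rw [vpref_eq, vpref_eq]
  have := pref_add_le (k := fun s => k (σ.symm s)) h
  simpa using this

lemma vpref_add_le_sum (i : Fin m) : vpref σ k i + k i ≤ ∑ t, k t := by
  rw [vpref_eq]
  have := pref_add_le_sum (k := fun s => k (σ.symm s)) (σ i)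
  have hs : ∑ s, k (σ.symm s) = ∑ t, k t := Equiv.sum_comp σ.symm k
  simp only [Equiv.symm_apply_apply] at this
  omega

lemma pref_succ (i : Fin m) (h2 : (i : ℕ) + 1 < m) :
    pref k ⟨(i : ℕ) + 1, h2⟩ = pref k i + k i := by
  unfold pref
  have : Finset.univ.filter (fun t => t < (⟨(i : ℕ) + 1, h2⟩ : Fin m)) =
      insert i (Finset.univ.filter (fun t => t < i)) := by
    ext t
    simp only [Finset.mem_insert, Finset.mem_filter, Finset.mem_univ, true_and,
      Fin.lt_def, Fin.ext_iff]
    omega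
  rw [this, Finset.sum_insert (by simp), add_comm]

lemma exists_block (hm : 0 < m) {p : ℕ} (hp : p < ∑ t, k t) :
    ∃ i : Fin m, pref k i ≤ p ∧ p < pref k i + k i := by
  classical
  set s : Finset (Fin m) := Finset.univ.filter (fun i => pref k i ≤ p) with hs
  have h0 : pref k ⟨0, hm⟩ = 0 := by
    unfold pref
    rw [Finset.filter_false_of_mem, Finset.sum_empty]
    intro t _
    simp [Fin.lt_def]
  have hne : s.Nonempty := ⟨⟨0, hm⟩, by simp [hs, h0]⟩
  set i := s.max' hne with hi
  have himem : i ∈ s := s.max'_mem hne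
  have hile : pref k i ≤ p := by
    have := himem; simp [hs] at this; exact this
  refine ⟨i, hile, ?_⟩
  by_contra hcon
  push_neg at hcon
  by_cases h2 : (i : ℕ) + 1 < m
  · have : (⟨(i : ℕ) + 1, h2⟩ : Fin m) ∈ s := by
      simp only [hs, Finset.mem_filter, Finset.mem_univ, true_and]
      rw [pref_succ i h2]; exact hcon
    have := s.le_max' _ this
    rw [← hi] at this
    simp [Fin.le_def] at this
  · have hlast : (i : ℕ) + 1 = m := by have := i.isLt; omega
    have huniv : (Finset.univ : Finset (Fin m)) =
        insert i (Finset.univ.filter (fun t => t < i)) := by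
      ext t
      simp only [Finset.mem_insert, Finset.mem_filter, Finset.mem_univ, true_and,
        Fin.lt_def, Fin.ext_iff, true_iff]
      have := t.isLt; omega
    have : ∑ t, k t = pref k i + k i := by
      rw [huniv, Finset.sum_insert (by simp)]
      unfold pref; rw [add_comm]
    omega

lemma block_unique {p : ℕ} {i i' : Fin m}
    (h1 : pref k i ≤ p) (h2 : p < pref k i + k i)
    (h1' : pref k i' ≤ p) (h2' : p < pref k i' + k i') : i = i' := by
  rcases lt_trichotomy i i' with h | h | h
  · have := pref_add_le (k := k) h; omega
  · exact h
  · have := pref_add_le (k := k) h; omega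

lemma exists_vblock (hm : 0 < m) {v : ℕ} (hv : v < ∑ t, k t) :
    ∃ i : Fin m, vpref σ k i ≤ v ∧ v < vpref σ k i + k i := by
  have hs : ∑ s, k (σ.symm s) = ∑ t, k t := Equiv.sum_comp σ.symm k
  obtain ⟨s, hs1, hs2⟩ := exists_block (k := fun s => k (σ.symm s)) hm (p := v)
    (by show v < ∑ s, k (σ.symm s); omega)
  refine ⟨σ.symm s, ?_, ?_⟩ <;>
    simp only [vpref_eq, Equiv.apply_symm_apply] <;> omega

lemma vblock_unique {v : ℕ} {i i' : Fin m}
    (h1 : vpref σ k i ≤ v) (h2 : v < vpref σ k i + k i)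
    (h1' : vpref σ k i' ≤ v) (h2' : v < vpref σ k i' + k i') : i = i' := by
  rcases lt_trichotomy (σ i) (σ i') with h | h | h
  · have := vpref_add_le (k := k) h; omega
  · exact σ.injective h
  · have := vpref_add_le (k := k) h; omega

end Aux

namespace Aux

variable {N : ℕ}

lemma pref_def {m : ℕ} (k : Fin m → ℕ) (i : Fin m) :
    pref k i = ∑ t ∈ Finset.univ.filter (fun t => t < i), k t := rfl

lemma vpref_def {m : ℕ} (σ : Perm m) (k : Fin m → ℕ) (i : Fin m) :
    vpref σ k i = ∑ t ∈ Finset.univ.filter (fun t => σ t < σ i), k t := rfl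

/-- Fact F : π maps the index block of `j` into the value block of `j`. -/
lemma infl_maps {m : ℕ} {k : Fin m → ℕ} {σ : Perm m} {α : ∀ i, Perm (k i)} {π : Perm N}
    (h : IsInflation σ α π) (j : Fin m) (p : Fin N)
    (h1 : pref k j ≤ (p : ℕ)) (h2 : (p : ℕ) < pref k j + k j) :
    vpref σ k j ≤ (π p : ℕ) ∧ (π p : ℕ) < vpref σ k j + k j := by
  obtain ⟨hk, hN, hf⟩ := h
  set j' : Fin (k j) := ⟨(p : ℕ) - pref k j, by omega⟩ with hj'
  have := hf j j' p (by rw [← pref_def]; simp [hj']; omega)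
  rw [← vpref_def] at this
  have hlt := (α j j').isLt
  omega

/-- Fact G : every element of the value block of `j` is hit from the index block of `j`. -/
lemma infl_surj {m : ℕ} {k : Fin m → ℕ} {σ : Perm m} {α : ∀ i, Perm (k i)} {π : Perm N}
    (h : IsInflation σ α π) (j : Fin m) (v : Fin N)
    (h1 : vpref σ k j ≤ (v : ℕ)) (h2 : (v : ℕ) < vpref σ k j + k j) :
    ∃ p : Fin N, π p = v ∧ pref k j ≤ (p : ℕ) ∧ (p : ℕ) < pref k j + k j := by
  obtain ⟨hk, hN, hf⟩ := h
  set j' : Fin (k j) := (α j).symm ⟨(v : ℕ) - vpref σ k j, by omega⟩ with hj'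
  have hple : pref k j + k j ≤ N := by
    have := pref_add_le_sum (k := k) j; omega
  have hj'lt := j'.isLt
  set p : Fin N := ⟨pref k j + (j' : ℕ), by omega⟩ with hp
  have := hf j j' p (by rw [← pref_def])
  rw [← vpref_def] at this
  refine ⟨p, ?_, ?_, ?_⟩
  · apply Fin.ext
    rw [this, hj']
    simp
    omega
  · show pref k j ≤ pref k j + (j' : ℕ)
    omega
  · show pref k j + (j' : ℕ) < pref k j + k j
    omega

lemma isRange_filter (A B : ℕ) :
    IsRange (Finset.univ.filter fun p : Fin N => A ≤ (p : ℕ) ∧ (p : ℕ) < B) := by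
  intro i j l hi hl h1 h2
  simp only [Finset.mem_filter, Finset.mem_univ, true_and] at *
  have h1' := Fin.le_def.mp h1
  have h2' := Fin.le_def.mp h2
  omega

lemma card_filter_range (A c : ℕ) (h : A + c ≤ N) :
    (Finset.univ.filter fun p : Fin N => A ≤ (p : ℕ) ∧ (p : ℕ) < A + c).card = c := by
  have himg : (Finset.univ.filter fun p : Fin N => A ≤ (p : ℕ) ∧ (p : ℕ) < A + c).image
      (Fin.val) = Finset.Ico A (A + c) := by
    ext n
    simp only [Finset.mem_image, Finset.mem_filter, Finset.mem_univ, true_and,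
      Finset.mem_Ico]
    constructor
    · rintro ⟨p, hp, rfl⟩; omega
    · intro hn; exact ⟨⟨n, by omega⟩, by simp [hn]⟩
  have := Finset.card_image_of_injective
    (Finset.univ.filter fun p : Fin N => A ≤ (p : ℕ) ∧ (p : ℕ) < A + c) Fin.val_injective
  rw [himg, Nat.card_Ico] at this
  omega

/-- The image of an index block under π is the corresponding value block. -/
lemma infl_image_block {m : ℕ} {k : Fin m → ℕ} {σ : Perm m} {α : ∀ i, Perm (k i)} {π : Perm N}
    (h : IsInflation σ α π) (i : Fin m) :
    (Finset.univ.filter fun p : Fin N => pref k i ≤ (p : ℕ) ∧ (p : ℕ) < pref k i + k i).image π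
      = Finset.univ.filter fun v : Fin N => vpref σ k i ≤ (v : ℕ) ∧ (v : ℕ) < vpref σ k i + k i := by
  ext v
  simp only [Finset.mem_image, Finset.mem_filter, Finset.mem_univ, true_and]
  constructor
  · rintro ⟨p, hp, rfl⟩
    exact infl_maps h i p hp.1 hp.2
  · intro hv
    obtain ⟨p, hpv, hp1, hp2⟩ := infl_surj h i v hv.1 hv.2
    exact ⟨p, ⟨hp1, hp2⟩, hpv⟩

lemma block_isPermInterval {m : ℕ} {k : Fin m → ℕ} {σ : Perm m} {α : ∀ i, Perm (k i)} {π : Perm N}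
    (h : IsInflation σ α π) (i : Fin m) :
    IsPermInterval π
      (Finset.univ.filter fun p : Fin N => pref k i ≤ (p : ℕ) ∧ (p : ℕ) < pref k i + k i) := by
  constructor
  · exact isRange_filter _ _
  · rw [infl_image_block h i]
    exact isRange_filter _ _

lemma isRange_erase {n : ℕ} (q : Fin n) (hq : (q : ℕ) = 0 ∨ (q : ℕ) = n - 1) :
    IsRange (Finset.univ.erase q) := by
  intro i j l hi hl h1 h2
  rw [Finset.mem_erase] at hi hl ⊢
  refine ⟨?_, Finset.mem_univ _⟩
  have h1' := Fin.le_def.mp h1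
  have h2' := Fin.le_def.mp h2
  have hiq : (i : ℕ) ≠ (q : ℕ) := fun e => hi.1 (Fin.ext e)
  have hlq : (l : ℕ) ≠ (q : ℕ) := fun e => hl.1 (Fin.ext e)
  have hln := l.isLt
  intro e
  rw [e] at h1' h2'
  omega

lemma simple_endpoints {m : ℕ} (hm : 3 ≤ m) {σ : Perm m} (hσ : IsSimple σ)
    (j : Fin m) (hj : (j : ℕ) = 0 ∨ (j : ℕ) = m - 1) :
    (σ j : ℕ) ≠ 0 ∧ (σ j : ℕ) ≠ m - 1 := by
  by_contra hc
  have hval : (σ j : ℕ) = 0 ∨ (σ j : ℕ) = m - 1 := by tauto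
  have himg : (Finset.univ.erase j).image σ = Finset.univ.erase (σ j) := by
    ext v
    simp only [Finset.mem_image, Finset.mem_erase, Finset.mem_univ, and_true, true_and]
    constructor
    · rintro ⟨u, hu, rfl⟩
      exact fun e => hu (σ.injective e)
    · intro hv
      exact ⟨σ.symm v, fun e => hv (by rw [← e]; simp), by simp⟩
  have hint : IsPermInterval σ (Finset.univ.erase j) :=
    ⟨isRange_erase j hj, by rw [himg]; exact isRange_erase (σ j) hval⟩
  have hcard : (Finset.univ.erase j).card = m - 1 := by
    rw [Finset.card_erase_of_mem (Finset.mem_univ _)]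
    simp
  rcases hσ _ hint with h | h <;> omega

end Aux

namespace Aux

lemma interval_subset_block {N m : ℕ} (hm : 4 ≤ m) {σ : Perm m} (hσ : IsSimple σ)
    {k : Fin m → ℕ} {α : ∀ i, Perm (k i)} {π : Perm N}
    (h : IsInflation σ α π) (I : Finset (Fin N)) (hI : IsPermInterval π I)
    (hcard : I.card < N) :
    ∃ j : Fin m, ∀ p ∈ I, pref k j ≤ (p : ℕ) ∧ (p : ℕ) < pref k j + k j := by
  classical
  have hm0 : 0 < m := by omega
  have hk := h.1
  have hN := h.2.1
  rcases I.eq_empty_or_nonempty with rfl | ⟨p0, hp0⟩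
  · exact ⟨⟨0, hm0⟩, by simp⟩
  obtain ⟨j0, hj01, hj02⟩ := exists_block (k := k) hm0 (p := (p0 : ℕ))
    (by rw [← hN]; exact p0.isLt)
  by_cases hall : ∀ p ∈ I, pref k j0 ≤ (p : ℕ) ∧ (p : ℕ) < pref k j0 + k j0
  · exact ⟨j0, hall⟩
  exfalso
  push_neg at hall
  obtain ⟨p1, hp1I, hp1⟩ := hall
  obtain ⟨j1, hj11, hj12⟩ := exists_block (k := k) hm0 (p := (p1 : ℕ))
    (by rw [← hN]; exact p1.isLt)
  have hj10 : j1 ≠ j0 := by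
    intro e
    have h1 := hp1 (e ▸ hj11)
    have h2 : (p1 : ℕ) < pref k j0 + k j0 := e ▸ hj12
    omega
  set T : Finset (Fin m) := Finset.univ.filter
    (fun j => ∃ p ∈ I, pref k j ≤ (p : ℕ) ∧ (p : ℕ) < pref k j + k j) with hT
  have hmemT : ∀ j : Fin m, j ∈ T ↔
      ∃ p ∈ I, pref k j ≤ (p : ℕ) ∧ (p : ℕ) < pref k j + k j := by
    intro j; simp [hT]
  have hj0T : j0 ∈ T := (hmemT j0).mpr ⟨p0, hp0, hj01, hj02⟩
  have hj1T : j1 ∈ T := (hmemT j1).mpr ⟨p1, hp1I, hj11, hj12⟩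
  have hTrange : IsRange T := by
    intro j1' j j2' hj1' hj2' hle1 hle2
    obtain ⟨a, haI, ha1, ha2⟩ := (hmemT j1').mp hj1'
    obtain ⟨c, hcI, hc1, hc2⟩ := (hmemT j2').mp hj2'
    rcases eq_or_lt_of_le hle1 with rfl | hlt
    · exact hj1'
    have hq1 : pref k j ≤ pref k j2' := pref_mono hle2
    have hqN : pref k j < N := by
      have := c.isLt; omega
    have haq : a ≤ (⟨pref k j, hqN⟩ : Fin N) := by
      rw [Fin.le_def]
      show (a : ℕ) ≤ pref k j
      have := pref_add_le (k := k) hlt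
      omega
    have hqc : (⟨pref k j, hqN⟩ : Fin N) ≤ c := by
      rw [Fin.le_def]
      show pref k j ≤ (c : ℕ)
      omega
    have hqI : (⟨pref k j, hqN⟩ : Fin N) ∈ I := hI.1 haI hcI haq hqc
    refine (hmemT j).mpr ⟨⟨pref k j, hqN⟩, hqI, ?_, ?_⟩
    · show pref k j ≤ pref k j; exact le_rfl
    · show pref k j < pref k j + k j
      have := hk j; omega
  have hTimg : IsRange (T.image σ) := by
    intro v1 v v2 hv1 hv2 hle1 hle2
    rw [Finset.mem_image] at hv1 hv2 ⊢
    obtain ⟨j1', hj1', rfl⟩ := hv1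
    obtain ⟨j2', hj2', rfl⟩ := hv2
    rcases eq_or_lt_of_le hle1 with e | hlt
    · exact ⟨j1', hj1', e⟩
    obtain ⟨a, haI, ha1, ha2⟩ := (hmemT j1').mp hj1'
    obtain ⟨c, hcI, hc1, hc2⟩ := (hmemT j2').mp hj2'
    have hσj : σ (σ.symm v) = v := σ.apply_symm_apply v
    have h1 : σ j1' < σ (σ.symm v) := by rw [hσj]; exact hlt
    have h2 : σ (σ.symm v) ≤ σ j2' := by rw [hσj]; exact hle2
    have hfa := infl_maps h j1' a ha1 ha2
    have hfc := infl_maps h j2' c hc1 hc2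
    have hv1' : vpref σ k j1' + k j1' ≤ vpref σ k (σ.symm v) := vpref_add_le h1
    have hv2' : vpref σ k (σ.symm v) ≤ vpref σ k j2' := vpref_mono h2
    have hwN : vpref σ k (σ.symm v) < N := by have := (π c).isLt; omega
    have hwmem : (⟨vpref σ k (σ.symm v), hwN⟩ : Fin N) ∈ I.image π := by
      apply hI.2 (i := π a) (l := π c)
      · exact Finset.mem_image_of_mem π haI
      · exact Finset.mem_image_of_mem π hcI
      · rw [Fin.le_def]
        show (π a : ℕ) ≤ vpref σ k (σ.symm v)
        omega
      · rw [Fin.le_def]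
        show vpref σ k (σ.symm v) ≤ (π c : ℕ)
        omega
    rw [Finset.mem_image] at hwmem
    obtain ⟨q, hqI, hqw⟩ := hwmem
    obtain ⟨j'', hq1, hq2⟩ := exists_block (k := k) hm0 (p := (q : ℕ))
      (by rw [← hN]; exact q.isLt)
    have hfq := infl_maps h j'' q hq1 hq2
    have hπq : (π q : ℕ) = vpref σ k (σ.symm v) := by rw [hqw]
    have hj'' : j'' = σ.symm v := vblock_unique (v := (π q : ℕ)) hfq.1 hfq.2
      (by omega) (by have := hk (σ.symm v); omega)
    exact ⟨j'', (hmemT j'').mpr ⟨q, hqI, hq1, hq2⟩, by rw [hj'']; exact hσj⟩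
  have hT2 : 1 < T.card := Finset.one_lt_card.mpr ⟨j1, hj1T, j0, hj0T, hj10⟩
  rcases hσ T ⟨hTrange, hTimg⟩ with hle | hcm
  · omega
  have hTuniv : T = Finset.univ := Finset.eq_univ_of_card T (by rw [hcm, Fintype.card_fin])
  have hmemT' : ∀ j : Fin m, ∃ p ∈ I, pref k j ≤ (p : ℕ) ∧ (p : ℕ) < pref k j + k j :=
    fun j => (hmemT j).mp (hTuniv ▸ Finset.mem_univ j)
  have hIuniv : I = Finset.univ := by
    rw [Finset.eq_univ_iff_forall]
    intro p
    obtain ⟨j, hpj1, hpj2⟩ := exists_block (k := k) hm0 (p := (p : ℕ))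
      (by rw [← hN]; exact p.isLt)
    by_cases hj : (j : ℕ) = 0 ∨ (j : ℕ) = m - 1
    · obtain ⟨hs0, hs1⟩ := simple_endpoints (by omega) hσ j hj
      have hlo : σ (σ.symm ⟨0, hm0⟩) < σ j := by
        rw [Fin.lt_def, σ.apply_symm_apply]
        show 0 < (σ j : ℕ)
        omega
      have hhi : σ j < σ (σ.symm ⟨m - 1, by omega⟩) := by
        rw [Fin.lt_def, σ.apply_symm_apply]
        show (σ j : ℕ) < m - 1
        have := (σ j).isLt; omega
      obtain ⟨a, haI, ha1, ha2⟩ := hmemT' (σ.symm ⟨0, hm0⟩)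
      obtain ⟨c, hcI, hc1, hc2⟩ := hmemT' (σ.symm ⟨m - 1, by omega⟩)
      have hfa := infl_maps h _ a ha1 ha2
      have hfc := infl_maps h _ c hc1 hc2
      have hfp := infl_maps h j p hpj1 hpj2
      have hv1 := vpref_add_le (k := k) hlo
      have hv2 := vpref_add_le (k := k) hhi
      have hpmem : π p ∈ I.image π := by
        apply hI.2 (i := π a) (l := π c)
        · exact Finset.mem_image_of_mem π haI
        · exact Finset.mem_image_of_mem π hcI
        · rw [Fin.le_def]; omega
        · rw [Fin.le_def]; omega
      rw [Finset.mem_image] at hpmem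
      obtain ⟨q, hqI, hq⟩ := hpmem
      rwa [← π.injective hq]
    · push_neg at hj
      obtain ⟨a, haI, ha1, ha2⟩ := hmemT' ⟨0, hm0⟩
      obtain ⟨c, hcI, hc1, hc2⟩ := hmemT' ⟨m - 1, by omega⟩
      have hj1' : (⟨0, hm0⟩ : Fin m) < j := by
        rw [Fin.lt_def]
        show 0 < (j : ℕ)
        omega
      have hj2' : j < (⟨m - 1, by omega⟩ : Fin m) := by
        rw [Fin.lt_def]
        show (j : ℕ) < m - 1
        have := j.isLt; omega
      have hlo := pref_add_le (k := k) hj1'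
      have hhi := pref_add_le (k := k) hj2'
      apply hI.1 haI hcI
      · rw [Fin.le_def]; omega
      · rw [Fin.le_def]; omega
  have : I.card = N := by rw [hIuniv, Finset.card_univ, Fintype.card_fin]
  omega

end Aux

namespace Aux

lemma block_le {N m : ℕ} (hm : 4 ≤ m) {σ : Perm m} (hσ : IsSimple σ)
    {k k' : Fin m → ℕ} {α : ∀ i, Perm (k i)} {α' : ∀ i, Perm (k' i)} {π : Perm N}
    (h : IsInflation σ α π) (h' : IsInflation σ α' π) (i : Fin m)
    (hpref : pref k i = pref k' i) : k i ≤ k' i := by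
  classical
  have hk := h.1
  have hN := h.2.1
  have hk' := h'.1
  have hm0 : 0 < m := by omega
  set Bi : Finset (Fin N) :=
    Finset.univ.filter fun p : Fin N => pref k i ≤ (p : ℕ) ∧ (p : ℕ) < pref k i + k i with hBi
  have hint := block_isPermInterval h i
  have hple : pref k i + k i ≤ N := by have := pref_add_le_sum (k := k) i; omega
  have hcard : Bi.card = k i := card_filter_range _ _ hple
  have hkiN : k i < N := by
    have hi2 : ∃ i2 : Fin m, i2 ≠ i := by
      rcases Nat.eq_zero_or_pos (i : ℕ) with e | e
      · exact ⟨⟨1, by omega⟩, Fin.ne_of_val_ne (by simp [e])⟩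
      · exact ⟨⟨0, hm0⟩, Fin.ne_of_val_ne (by simp; omega)⟩
    obtain ⟨i2, hi2⟩ := hi2
    have h1 : k i ≤ ∑ t ∈ Finset.univ.erase i2, k t :=
      Finset.single_le_sum (fun _ _ => Nat.zero_le _)
        (Finset.mem_erase.mpr ⟨Ne.symm hi2, Finset.mem_univ _⟩)
    have h2 : ∑ t ∈ Finset.univ.erase i2, k t + k i2 = ∑ t, k t :=
      Finset.sum_erase_add _ _ (Finset.mem_univ _)
    have := hk i2
    omega
  obtain ⟨j, hj⟩ := interval_subset_block hm hσ h' Bi hint (by omega)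
  have hp0N : pref k i < N := by have := hk i; omega
  have hp0 : (⟨pref k i, hp0N⟩ : Fin N) ∈ Bi := by
    simp only [hBi, Finset.mem_filter, Finset.mem_univ, true_and]
    refine ⟨?_, ?_⟩
    · show pref k i ≤ pref k i; exact le_rfl
    · show pref k i < pref k i + k i; have := hk i; omega
  have hj0 : pref k' j ≤ pref k i ∧ pref k i < pref k' j + k' j := hj _ hp0
  have hji : j = i := by
    apply block_unique (k := k') (p := pref k i) hj0.1 hj0.2
    · omega
    · have := hk' i; omega
  have hp1N : pref k i + k i - 1 < N := by omega
  have hp1 : (⟨pref k i + k i - 1, hp1N⟩ : Fin N) ∈ Bi := by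
    simp only [hBi, Finset.mem_filter, Finset.mem_univ, true_and]
    have := hk i
    refine ⟨?_, ?_⟩
    · show pref k i ≤ pref k i + k i - 1; omega
    · show pref k i + k i - 1 < pref k i + k i; omega
  have hj1 : pref k' j ≤ pref k i + k i - 1 ∧ pref k i + k i - 1 < pref k' j + k' j :=
    hj _ hp1
  rw [hji] at hj1
  have := hk i
  omega

lemma perm_heq {a b : ℕ} (e : a = b) (f : Perm a) (g : Perm b)
    (hfg : ∀ j : Fin a, ((f j : ℕ)) = ((g (Fin.cast e j) : ℕ))) : HEq f g := by
  subst e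
  apply heq_of_eq
  apply Equiv.ext
  intro j
  apply Fin.ext
  simpa using hfg j

end Aux


/-- If `σ` is a simple permutation of length `m ≥ 4`, then the blocks of an inflation
of `σ` are uniquely determined. -/
theorem statement9 (m : ℕ) (hm : 4 ≤ m) (σ : Perm m) (hσ : IsSimple σ)
    (k k' : Fin m → ℕ) (α : ∀ i, Perm (k i)) (α' : ∀ i, Perm (k' i))
    (N : ℕ) (π : Perm N) (h : IsInflation σ α π) (h' : IsInflation σ α' π) :
    ∀ i : Fin m, k i = k' i ∧ HEq (α i) (α' i) := by
  have hm0 : 0 < m := by omega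
  have hN := h.2.1
  have hf := h.2.2
  have hf' := h'.2.2
  have hkk : ∀ i : Fin m, k i = k' i := by
    have main : ∀ n : ℕ, ∀ i : Fin m, (i : ℕ) = n → k i = k' i := by
      intro n
      induction n using Nat.strong_induction_on with
      | _ n IH =>
        intro i hi
        have hpref : Aux.pref k i = Aux.pref k' i := by
          apply Finset.sum_congr rfl
          intro t ht
          simp only [Finset.mem_filter, Finset.mem_univ, true_and] at ht
          exact IH (t : ℕ) (by rw [← hi]; exact ht) t rfl
        have h1 := Aux.block_le hm hσ h h' i hpref
        have h2 := Aux.block_le hm hσ h' h i hpref.symm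
        omega
    intro i; exact main (i : ℕ) i rfl
  intro i
  refine ⟨hkk i, ?_⟩
  have hpref : Aux.pref k i = Aux.pref k' i := Finset.sum_congr rfl (fun t _ => hkk t)
  have hvpref : Aux.vpref σ k i = Aux.vpref σ k' i := Finset.sum_congr rfl (fun t _ => hkk t)
  apply Aux.perm_heq (hkk i)
  intro j
  have hple := Aux.pref_add_le_sum (k := k) i
  have hjlt := j.isLt
  have hpN : Aux.pref k i + (j : ℕ) < N := by omega
  have e1 := hf i j ⟨Aux.pref k i + (j : ℕ), hpN⟩ (by rw [← Aux.pref_def])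
  have e2 := hf' i (Fin.cast (hkk i) j) ⟨Aux.pref k i + (j : ℕ), hpN⟩
    (by rw [← Aux.pref_def, ← hpref, Fin.coe_cast])
  rw [← Aux.vpref_def] at e1
  rw [← Aux.vpref_def, ← hvpref] at e2
  omega
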